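/- Let J = [[0,0,I_n],[0,I_r,0],[I_n,0,0]] and let G be a real symmetric positive definite (2n+r)×(2n+r) matrix with JGJ = G⁻¹. Then there exist a unique h ∈ Sym⁺_n(ℝ), n₁ ∈ M_{n,r}(ℝ), and n₂ ∈ M_n(ℝ) with n₂ + n₂ᵀ = -n₁n₁ᵀ such that G = N A Nᵀ, where N = [[I_n,0,0],[n₁ᵀ,I_r,0],[n₂ᵀ,-n₁,I_n]] and A = diag(h, I_r, h⁻¹). -/

import Mathlib

open Matrix

lemma posDef_sub_inl {α β : Type*} [Fintype α] [Fintype β] [DecidableEq α] [DecidableEq β]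
    {M : Matrix (α ⊕ β) (α ⊕ β) ℝ} (hM : M.PosDef) :
    (M.submatrix Sum.inl Sum.inl).PosDef := by
  rw [posDef_iff_dotProduct_mulVec] at hM ⊢
  refine ⟨hM.1.submatrix _, fun x hx => ?_⟩
  have hx' : (Sum.elim x 0 : α ⊕ β → ℝ) ≠ 0 := by
    intro h; exact hx (funext fun i => congrFun h (Sum.inl i))
  have := hM.2 hx'
  convert this using 1
  simp [dotProduct, mulVec, Fintype.sum_sum_type, submatrix]

lemma fromRows_add' {R m₁ m₂ n' : Type*} [AddCommMonoid R] (A₁ C₁ : Matrix m₁ n' R)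
    (A₂ C₂ : Matrix m₂ n' R) :
    fromRows A₁ A₂ + fromRows C₁ C₂ = fromRows (A₁ + C₁) (A₂ + C₂) := by
  ext (i | i) j <;> simp

lemma fromCols_add' {R m n₁ n₂ : Type*} [AddCommMonoid R] (A₁ C₁ : Matrix m n₁ R)
    (A₂ C₂ : Matrix m n₂ R) :
    fromCols A₁ A₂ + fromCols C₁ C₂ = fromCols (A₁ + C₁) (A₂ + C₂) := by
  ext i (j | j) <;> simp

lemma fc_zero_fr {R m₁ m₂ n₁ n₂ : Type*} [Zero R] (B₁ : Matrix m₁ n₂ R) (B₂ : Matrix m₂ n₂ R) :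
    fromCols (0 : Matrix (m₁ ⊕ m₂) n₁ R) (fromRows B₁ B₂) = fromBlocks 0 B₁ 0 B₂ := by
  ext (i | i) (j | j) <;> simp

lemma fc_fr_zero {R m₁ m₂ n₁ n₂ : Type*} [Zero R] (B₁ : Matrix m₁ n₁ R) (B₂ : Matrix m₂ n₁ R) :
    fromCols (fromRows B₁ B₂) (0 : Matrix (m₁ ⊕ m₂) n₂ R) = fromBlocks B₁ 0 B₂ 0 := by
  ext (i | i) (j | j) <;> simp

lemma NANt {n r : ℕ} (h : Matrix (Fin n) (Fin n) ℝ) (n₁ : Matrix (Fin n) (Fin r) ℝ)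
    (n₂ : Matrix (Fin n) (Fin n) ℝ) :
    (Matrix.fromBlocks 1 0 (Matrix.fromRows n₁ᵀ n₂ᵀ) (Matrix.fromBlocks 1 0 (-n₁) 1)) *
      (Matrix.fromBlocks h 0 0 (Matrix.fromBlocks 1 0 0 h⁻¹)) *
      (Matrix.fromBlocks 1 0 (Matrix.fromRows n₁ᵀ n₂ᵀ) (Matrix.fromBlocks 1 0 (-n₁) 1))ᵀ =
    Matrix.fromBlocks h (Matrix.fromCols (h * n₁) (h * n₂))
      (Matrix.fromRows (n₁ᵀ * h) (n₂ᵀ * h))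
      (Matrix.fromBlocks (n₁ᵀ * h * n₁ + 1) (n₁ᵀ * h * n₂ - n₁ᵀ)
        (n₂ᵀ * h * n₁ - n₁) (n₂ᵀ * h * n₂ + (n₁ * n₁ᵀ + h⁻¹))) := by
  rw [fromBlocks_transpose, fromBlocks_transpose, transpose_fromRows]
  simp only [fromBlocks_multiply, fromRows_mul, mul_fromCols, fromRows_mul_fromCols,
    fromBlocks_mul_fromRows, fromBlocks_add, transpose_one, transpose_zero, transpose_transpose,
    Matrix.mul_one, Matrix.one_mul, Matrix.zero_mul, Matrix.mul_zero, add_zero, zero_add,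
    fromRows_zero, fromCols_zero, neg_mul, mul_neg, transpose_neg, neg_neg, Matrix.mul_assoc]
  simp [fromCols_fromRows_eq_fromBlocks, fromBlocks_add, neg_mul_neg, sub_eq_add_neg]

theorem stmt4 (n r : ℕ)
    (J G : Matrix (Fin n ⊕ (Fin r ⊕ Fin n)) (Fin n ⊕ (Fin r ⊕ Fin n)) ℝ)
    (hJ : J = Matrix.fromBlocks 0 (Matrix.fromCols 0 1) (Matrix.fromRows 0 1)
      (Matrix.fromBlocks 1 0 0 0))
    (hG : G.PosDef) (hGsymm : Gᵀ = G) (hGJ : J * G * J = G⁻¹) :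
    ∃! p : Matrix (Fin n) (Fin n) ℝ × Matrix (Fin n) (Fin r) ℝ × Matrix (Fin n) (Fin n) ℝ,
      p.1.PosDef ∧ p.1ᵀ = p.1 ∧ p.2.2 + p.2.2ᵀ = -(p.2.1 * p.2.1ᵀ) ∧
      G = (Matrix.fromBlocks 1 0 (Matrix.fromRows p.2.1ᵀ p.2.2ᵀ)
            (Matrix.fromBlocks 1 0 (-p.2.1) 1)) *
          (Matrix.fromBlocks p.1 0 0 (Matrix.fromBlocks 1 0 0 p.1⁻¹)) *
          (Matrix.fromBlocks 1 0 (Matrix.fromRows p.2.1ᵀ p.2.2ᵀ)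
            (Matrix.fromBlocks 1 0 (-p.2.1) 1))ᵀ := by
  have hsym : ∀ x y, G x y = G y x := fun x y => by
    conv_lhs => rw [← hGsymm, transpose_apply]
  set a : Matrix (Fin n) (Fin n) ℝ := of (fun i j => G (Sum.inl i) (Sum.inl j)) with ha_def
  set b : Matrix (Fin n) (Fin r) ℝ := of (fun i j => G (Sum.inl i) (Sum.inr (Sum.inl j))) with hb_def
  set c : Matrix (Fin n) (Fin n) ℝ := of (fun i j => G (Sum.inl i) (Sum.inr (Sum.inr j))) with hc_def
  set d : Matrix (Fin r) (Fin r) ℝ := of (fun i j => G (Sum.inr (Sum.inl i)) (Sum.inr (Sum.inl j))) with hd_def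
  set e : Matrix (Fin r) (Fin n) ℝ := of (fun i j => G (Sum.inr (Sum.inl i)) (Sum.inr (Sum.inr j))) with he_def
  set f : Matrix (Fin n) (Fin n) ℝ := of (fun i j => G (Sum.inr (Sum.inr i)) (Sum.inr (Sum.inr j))) with hf_def
  have hGdec : G = fromBlocks a (fromCols b c) (fromRows bᵀ cᵀ) (fromBlocks d e eᵀ f) := by
    ext (i | i | i) (j | j | j) <;>
      simp [ha_def, hb_def, hc_def, hd_def, he_def, hf_def, fromBlocks, fromCols, fromRows] <;>
      apply hsym
  have hdet : IsUnit G.det := (Matrix.isUnit_iff_isUnit_det G).mp hG.isUnit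
  have h1 : J * G * J * G = 1 := by rw [hGJ]; exact nonsing_inv_mul G hdet
  rw [hJ, hGdec] at h1
  simp only [fromBlocks_multiply, fromCols_mul_fromRows, fromCols_mul_fromBlocks,
    fromBlocks_mul_fromRows, fromRows_mul, mul_fromCols, fromRows_mul_fromCols,
    fromRows_add', fromCols_add', fromBlocks_add, fromCols_fromRows_eq_fromBlocks,
    fc_zero_fr, fc_fr_zero,
    Matrix.zero_mul, Matrix.mul_zero, Matrix.one_mul, Matrix.mul_one, add_zero, zero_add,
    Matrix.mul_assoc] at h1
  rw [show (1 : Matrix (Fin n ⊕ (Fin r ⊕ Fin n)) (Fin n ⊕ (Fin r ⊕ Fin n)) ℝ) =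
    fromBlocks 1 (fromCols 0 0) (fromRows 0 0) (fromBlocks 1 0 0 1) by
      rw [fromCols_zero, fromRows_zero, fromBlocks_one, fromBlocks_one]] at h1
  obtain ⟨E11, E1x, Ex1, Eyy⟩ := fromBlocks_inj.mp h1
  obtain ⟨E12, E13⟩ := fromCols_inj E1x
  obtain ⟨E21, E31⟩ := fromRows_inj Ex1
  obtain ⟨E22, E23, E32, E33⟩ := fromBlocks_inj.mp Eyy
  -- basic facts about a
  have haP : a.PosDef := posDef_sub_inl hG
  have haS : aᵀ = a := by ext i j; simp [ha_def]; exact hsym _ _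
  have hadet : IsUnit a.det := (Matrix.isUnit_iff_isUnit_det a).mp haP.isUnit
  have haa : a * a⁻¹ = 1 := mul_nonsing_inv a hadet
  have h1a : a⁻¹ * a = 1 := nonsing_inv_mul a hadet
  have haiS : a⁻¹ᵀ = a⁻¹ := by rw [transpose_nonsing_inv, haS]
  have hc1 : ∀ {m : Type} (X : Matrix (Fin n) m ℝ), a * (a⁻¹ * X) = X := fun X => by
    rw [← Matrix.mul_assoc, haa, Matrix.one_mul]
  have hc2 : ∀ {m : Type} (X : Matrix (Fin n) m ℝ), a⁻¹ * (a * X) = X := fun X => by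
    rw [← Matrix.mul_assoc, h1a, Matrix.one_mul]
  have key := congrArg (fun M => a⁻¹ * (M * a⁻¹)) E31
  simp only [Matrix.mul_add, Matrix.add_mul, Matrix.mul_assoc, hc1, hc2,
    Matrix.mul_zero, Matrix.zero_mul, Matrix.mul_one, Matrix.one_mul, haa, h1a] at key
  -- key : a⁻¹ * c + (a⁻¹ * (b * (bᵀ * a⁻¹)) + cᵀ * a⁻¹) = 0
  have he2 := congrArg (fun M => M * a⁻¹) E21
  simp only [Matrix.mul_add, Matrix.add_mul, Matrix.mul_assoc, hc1, hc2,
    Matrix.mul_zero, Matrix.zero_mul, Matrix.mul_one, Matrix.one_mul, haa, h1a] at he2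
  -- he2 : e + (d * (bᵀ * a⁻¹) + bᵀ * (cᵀ * a⁻¹)) = 0
  have heT := congrArg (fun M => a⁻¹ * M) E32
  simp only [Matrix.mul_add, Matrix.add_mul, Matrix.mul_assoc, hc1, hc2,
    Matrix.mul_zero, Matrix.zero_mul, Matrix.mul_one, Matrix.one_mul, haa, h1a] at heT
  -- heT : a⁻¹ * (c * b) + (a⁻¹ * (b * d) + eᵀ) = 0
  have he3 : e = -(d * (bᵀ * a⁻¹) + bᵀ * (cᵀ * a⁻¹)) := eq_neg_of_add_eq_zero_left he2
  have heT3 : eᵀ = -(a⁻¹ * (c * b) + a⁻¹ * (b * d)) := by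
    rw [← add_assoc] at heT; exact eq_neg_of_add_eq_zero_right heT
  have keyc : cᵀ * a⁻¹ = -(a⁻¹ * c + a⁻¹ * (b * (bᵀ * a⁻¹))) := by
    rw [← add_assoc] at key; exact eq_neg_of_add_eq_zero_right key
  -- the square of the Schur middle block
  have hsq : (d - bᵀ * (a⁻¹ * b)) * (d - bᵀ * (a⁻¹ * b)) = 1 := by
    have keyb := congrArg (fun M => bᵀ * (M * b)) key
    simp only [Matrix.mul_add, Matrix.add_mul, Matrix.mul_assoc, hc1, hc2,
      Matrix.mul_zero, Matrix.zero_mul] at keyb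
    have hdd : d * d = 1 - (e * b + bᵀ * eᵀ) := by
      rw [← E22]; abel
    rw [Matrix.sub_mul, Matrix.mul_sub, Matrix.mul_sub, hdd, heT3, he3]
    simp only [Matrix.neg_mul, Matrix.mul_neg, Matrix.add_mul, Matrix.mul_add, Matrix.mul_assoc]
    rw [← sub_eq_zero]
    refine Eq.trans ?_ keyb
    abel
  -- Schur complement positivity
  haveI : Invertible a := a.invertibleOfIsUnitDet hadet
  have hGpsd : (fromBlocks a ((fromCols b c)) ((fromCols b c)ᴴ)
      (fromBlocks d e eᵀ f)).PosSemidef := by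
    have hCT : (fromCols b c)ᴴ = fromRows bᵀ cᵀ := by
      rw [conjTranspose_eq_transpose_of_trivial, transpose_fromCols]
    rw [hCT, ← hGdec]; exact hG.posSemidef
  have hS := (PosDef.fromBlocks₁₁ (fromCols b c) (fromBlocks d e eᵀ f) haP).mp hGpsd
  have hSub : (fromBlocks d e eᵀ f - (fromCols b c)ᴴ * a⁻¹ * fromCols b c) =
      fromBlocks (d - bᵀ * (a⁻¹ * b)) (e - bᵀ * (a⁻¹ * c))
        (eᵀ - cᵀ * (a⁻¹ * b)) (f - cᵀ * (a⁻¹ * c)) := by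
    rw [conjTranspose_eq_transpose_of_trivial, transpose_fromCols, Matrix.mul_assoc,
      mul_fromCols, fromRows_mul_fromCols]
    simp [sub_eq_add_neg, fromBlocks_neg, fromBlocks_add]
  rw [hSub] at hS
  have hdu_psd : (d - bᵀ * (a⁻¹ * b)).PosSemidef := by
    have h' := hS.submatrix Sum.inl
    have : ((fromBlocks (d - bᵀ * (a⁻¹ * b)) (e - bᵀ * (a⁻¹ * c))
        (eᵀ - cᵀ * (a⁻¹ * b)) (f - cᵀ * (a⁻¹ * c))).submatrix Sum.inl Sum.inl) =
        d - bᵀ * (a⁻¹ * b) := by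
      ext i j; simp
    rwa [this] at h'
  have hd1 : d = 1 + bᵀ * (a⁻¹ * b) := by
    have hone : ((1 : Matrix (Fin r) (Fin r) ℝ)).PosSemidef := Matrix.PosSemidef.one
    have : d - bᵀ * (a⁻¹ * b) = 1 := by
      have hsq2 : (d - bᵀ * (a⁻¹ * b)) ^ 2 = 1 ^ 2 := by
        rw [pow_two, pow_two, hsq, Matrix.one_mul]
      open scoped MatrixOrder in
      rw [← CFC.sqrt_sq _ hdu_psd.nonneg, hsq2, CFC.sqrt_sq _ hone.nonneg]
    rw [sub_eq_iff_eq_add] at this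
    exact this
  -- formulas for e and f
  have he4 : e = bᵀ * (a⁻¹ * c) - bᵀ * a⁻¹ := by
    rw [he3, hd1, keyc]
    simp only [Matrix.add_mul, Matrix.mul_add, Matrix.mul_neg, Matrix.neg_mul,
      Matrix.one_mul, Matrix.mul_assoc]
    abel
  have hf4 : f = cᵀ * (a⁻¹ * c) + (a⁻¹ * (b * (bᵀ * a⁻¹)) + a⁻¹) := by
    have hf0 := congrArg (fun M => a⁻¹ * M) E33
    simp only [Matrix.mul_add, Matrix.add_mul, Matrix.mul_assoc, hc1, hc2,
      Matrix.mul_zero, Matrix.zero_mul, Matrix.mul_one, Matrix.one_mul] at hf0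
    -- hf0 : a⁻¹ * (c * c) + (a⁻¹ * (b * e) + f) = a⁻¹  (expected)
    have keyC := congrArg (fun M => M * c) key
    simp only [Matrix.mul_add, Matrix.add_mul, Matrix.mul_assoc, hc1, hc2,
      Matrix.mul_zero, Matrix.zero_mul] at keyC
    -- keyC : a⁻¹ * (c * c) + (a⁻¹ * (b * (bᵀ * (a⁻¹ * c))) + cᵀ * (a⁻¹ * c)) = 0
    have hf0' : f + (a⁻¹ * (c * c) + a⁻¹ * (b * e)) = a⁻¹ :=
      (show f + (a⁻¹ * (c * c) + a⁻¹ * (b * e)) =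
        a⁻¹ * (c * c) + (a⁻¹ * (b * e) + f) by abel).trans hf0
    have hf1 : f = a⁻¹ - (a⁻¹ * (c * c) + a⁻¹ * (b * e)) := eq_sub_of_add_eq hf0'
    rw [hf1, he4]
    simp only [Matrix.mul_sub, Matrix.mul_add, Matrix.mul_assoc]
    rw [← sub_eq_zero]
    refine Eq.trans ?_ (show -(a⁻¹ * (c * c) + (a⁻¹ * (b * (bᵀ * (a⁻¹ * c))) +
      cᵀ * (a⁻¹ * c))) = 0 by rw [keyC, neg_zero])
    abel
  -- the witness
  refine ⟨(a, a⁻¹ * b, a⁻¹ * c), ⟨haP, haS, ?_, ?_⟩, ?_⟩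
  · -- n₂ + n₂ᵀ = -(n₁ * n₁ᵀ)
    show a⁻¹ * c + (a⁻¹ * c)ᵀ = -((a⁻¹ * b) * (a⁻¹ * b)ᵀ)
    rw [transpose_mul, transpose_mul, haiS]
    have := eq_neg_of_add_eq_zero_left key
    rw [← sub_eq_zero]
    rw [← sub_eq_zero] at key
    refine Eq.trans ?_ key
    simp only [Matrix.mul_assoc]
    abel
  · -- the decomposition
    show G = _
    rw [NANt, hGdec]
    refine fromBlocks_inj.mpr ⟨rfl, ?_, ?_, ?_⟩
    · rw [hc1, hc1]
    · rw [transpose_mul, transpose_mul, haiS, Matrix.mul_assoc, Matrix.mul_assoc, h1a,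
        Matrix.mul_one, Matrix.mul_one]
    · refine fromBlocks_inj.mpr ⟨?_, ?_, ?_, ?_⟩
      · rw [hd1, transpose_mul, haiS, Matrix.mul_assoc, Matrix.mul_assoc, hc1]; abel
      · rw [he4, transpose_mul, haiS, Matrix.mul_assoc, Matrix.mul_assoc, hc1]
      · have heT4 : eᵀ = cᵀ * (a⁻¹ * b) - a⁻¹ * b := by
          rw [he4, transpose_sub, transpose_mul, transpose_mul, transpose_mul, haiS,
            transpose_transpose, Matrix.mul_assoc]
        rw [heT4, transpose_mul, haiS, Matrix.mul_assoc, Matrix.mul_assoc, hc1]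
      · rw [hf4, transpose_mul, haiS, Matrix.mul_assoc, Matrix.mul_assoc, hc1,
          transpose_mul, haiS]
        simp only [Matrix.mul_assoc]
  · -- uniqueness
    rintro ⟨h, n₁, n₂⟩ ⟨hP, hS', hcond, hEq⟩
    have hhdet : IsUnit h.det := (Matrix.isUnit_iff_isUnit_det h).mp hP.isUnit
    rw [NANt] at hEq
    rw [hGdec] at hEq
    obtain ⟨hah, hbc, -, -⟩ := fromBlocks_inj.mp hEq
    obtain ⟨hb1, hc1'⟩ := fromCols_inj hbc
    subst hah
    have hn1 : n₁ = a⁻¹ * b := by rw [hb1, hc2]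
    have hn2 : n₂ = a⁻¹ * c := by rw [hc1', hc2]
    simp [Prod.ext_iff, hn1, hn2]
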